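/- (Desargues' involution theorem for a circle through the quadrangle.) Let B, C, D, E be four pairwise distinct points lying on a circle 𝒞 of ℝ², no three of them collinear. Let Δ be a line that is not parallel to any of the six side lines BC, DE, BE, CD, BD, CE and does not pass through any point of pairwise intersection of these six lines, and suppose Δ meets the circle 𝒞 in two distinct points L and M. Let I = Δ∩BC, K = Δ∩DE, P = Δ∩BE, Q = Δ∩CD. Then QL·QM·PI·PK = PL·PM·QI·QK; that is, (L,M) and (I,K) are couples of the same involution as determined by the couple (P,Q). -/

import Mathlib

noncomputable section

open EuclideanGeometry

abbrev Pt : Type := EuclideanSpace ℝ (Fin 2)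

/-- The affine line through two points of the Euclidean plane. -/
def lineThrough (x y : Pt) : AffineSubspace ℝ Pt := affineSpan ℝ {x, y}

/-- A subset of the plane is a line if it is the affine span of two distinct points. -/
def IsLine (s : AffineSubspace ℝ Pt) : Prop := ∃ x y : Pt, x ≠ y ∧ s = lineThrough x y

/-- The six side lines of a complete quadrangle B, C, D, E. -/
def sides (B C D E : Pt) : Set (AffineSubspace ℝ Pt) :=
  {lineThrough B C, lineThrough D E, lineThrough B E,
   lineThrough C D, lineThrough B D, lineThrough C E}


private lemma key_scalar
    (b1 b2 c1 c2 d1 d2 e1 e2 o1 o2 s a1 a2 v1 v2 l m i k p q : ℝ)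
    (Hb : (b1-o1)^2+(b2-o2)^2 = s) (Hc : (c1-o1)^2+(c2-o2)^2 = s)
    (Hd : (d1-o1)^2+(d2-o2)^2 = s) (He : (e1-o1)^2+(e2-o2)^2 = s)
    (Hl : (a1+l*v1-o1)^2+(a2+l*v2-o2)^2 = s)
    (Hm : (a1+m*v1-o1)^2+(a2+m*v2-o2)^2 = s)
    (Hi : (c1-b1)*(a2+i*v2-b2) - (c2-b2)*(a1+i*v1-b1) = 0)
    (Hk : (e1-d1)*(a2+k*v2-d2) - (e2-d2)*(a1+k*v1-d1) = 0)
    (Hp : (e1-b1)*(a2+p*v2-b2) - (e2-b2)*(a1+p*v1-b1) = 0)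
    (Hq : (d1-c1)*(a2+q*v2-c2) - (d2-c2)*(a1+q*v1-c1) = 0)
    (Hv : v1^2+v2^2 ≠ 0) (Hlm : l ≠ m)
    (H1 : ((c1-b1)*(e2-b2) - (c2-b2)*(e1-b1)) ≠ 0)
    (H2 : ((d1-b1)*(e2-b2) - (d2-b2)*(e1-b1)) ≠ 0)
    (H3 : ((c1-b1)*(d2-b2) - (c2-b2)*(d1-b1)) ≠ 0) :
    (q-l)*(q-m)*(p-i)*(p-k) = (p-l)*(p-m)*(q-i)*(q-k) := by
  obtain ⟨α, β, γ, hγ, ed1, ed2, ed3⟩ :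
      ∃ α β γ : ℝ, γ ≠ 0 ∧
        α*((c2-b2)*(e2-d2)) + β*((e2-b2)*(d2-c2)) = γ ∧
        α*(-((c1-b1)*(e2-d2)+(c2-b2)*(e1-d1))) + β*(-((e1-b1)*(d2-c2)+(e2-b2)*(d1-c1))) = 0 ∧
        α*((c1-b1)*(e1-d1)) + β*((e1-b1)*(d1-c1)) = γ := by
    have hκ : ((-((e1-b1)*(d2-c2)+(e2-b2)*(d1-c1)))*((c2-b2)*(e2-d2)) - (-((c1-b1)*(e2-d2)+(c2-b2)*(e1-d1)))*((e2-b2)*(d2-c2))) - ((-((e1-b1)*(d2-c2)+(e2-b2)*(d1-c1)))*((c1-b1)*(e1-d1)) - (-((c1-b1)*(e2-d2)+(c2-b2)*(e1-d1)))*((e1-b1)*(d1-c1))) = 0 := by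
      linear_combination (-((d1-c1)*(e2-c2)-(d2-c2)*(e1-c1)))*Hb + ((d1-b1)*(e2-b2)-(d2-b2)*(e1-b1))*Hc + (-((c1-b1)*(e2-b2)-(c2-b2)*(e1-b1)))*Hd + ((c1-b1)*(d2-b2)-(c2-b2)*(d1-b1))*He
    by_cases h0 : (-((e1-b1)*(d2-c2)+(e2-b2)*(d1-c1)))*((c2-b2)*(e2-d2)) - (-((c1-b1)*(e2-d2)+(c2-b2)*(e1-d1)))*((e2-b2)*(d2-c2)) = 0
    · have hγ2 : (-((e1-b1)*(d2-c2)+(e2-b2)*(d1-c1)))*((c1-b1)*(e1-d1)) - (-((c1-b1)*(e2-d2)+(c2-b2)*(e1-d1)))*((e1-b1)*(d1-c1)) = 0 := by linear_combination h0 - hκ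
      have hγ3 : ((c2-b2)*(e2-d2))*((e1-b1)*(d1-c1)) - ((c1-b1)*(e1-d1))*((e2-b2)*(d2-c2)) ≠ 0 := by
        intro h3
        have hfac : ((c1-b1)*(e2-b2) - (c2-b2)*(e1-b1))^2 * ((d1-b1)*(e2-b2) - (d2-b2)*(e1-b1)) * ((c1-b1)*(d2-b2) - (c2-b2)*(d1-b1)) = 0 := by
          linear_combination ((c1-b1)^2*(e1-b1)*(e2-b2) - (e1-b1)^2*(c1-b1)*(c2-b2))*h0 + ((c1-b1)^2*(e2-b2)^2 - (e1-b1)^2*(c2-b2)^2)*h3 + (-((c1-b1)*(c2-b2)*(e2-b2)^2 - (e1-b1)*(e2-b2)*(c2-b2)^2))*hγ2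
        exact (mul_ne_zero (mul_ne_zero (pow_ne_zero 2 H1) H2) H3) hfac
      exact ⟨((e1-b1)*(d1-c1)) - ((e2-b2)*(d2-c2)), ((c2-b2)*(e2-d2)) - ((c1-b1)*(e1-d1)), ((c2-b2)*(e2-d2))*((e1-b1)*(d1-c1)) - ((c1-b1)*(e1-d1))*((e2-b2)*(d2-c2)), hγ3,
        by ring, by linear_combination h0 - hγ2, by ring⟩
    · exact ⟨(-((e1-b1)*(d2-c2)+(e2-b2)*(d1-c1))), -(-((c1-b1)*(e2-d2)+(c2-b2)*(e1-d1))), (-((e1-b1)*(d2-c2)+(e2-b2)*(d1-c1)))*((c2-b2)*(e2-d2)) - (-((c1-b1)*(e2-d2)+(c2-b2)*(e1-d1)))*((e2-b2)*(d2-c2)), h0, by ring, by ring,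
        by linear_combination -hκ⟩
  have hT : ∀ x y : ℝ, ((c1-b1)*(d2-b2) - (c2-b2)*(d1-b1)) *
      (γ*((x-o1)^2+(y-o2)^2-s) - α*(( (c1-b1)*(y-b2)-(c2-b2)*(x-b1) )*( (e1-d1)*(y-d2)-(e2-d2)*(x-d1) )) - β*(( (e1-b1)*(y-b2)-(e2-b2)*(x-b1) )*( (d1-c1)*(y-c2)-(d2-c2)*(x-c1) ))) = 0 := by
    intro x y
    linear_combination (-((c1-b1)*(d2-b2) - (c2-b2)*(d1-b1))*x^2 + ((c1-x)*(d2-y)-(c2-y)*(d1-x))*b1^2 + ((d1-x)*(b2-y)-(d2-y)*(b1-x))*c1^2 + ((b1-x)*(c2-y)-(b2-y)*(c1-x))*d1^2)*ed1 + (-((c1-b1)*(d2-b2) - (c2-b2)*(d1-b1))*x*y + ((c1-x)*(d2-y)-(c2-y)*(d1-x))*b1*b2 + ((d1-x)*(b2-y)-(d2-y)*(b1-x))*c1*c2 + ((b1-x)*(c2-y)-(b2-y)*(c1-x))*d1*d2)*ed2 + (-((c1-b1)*(d2-b2) - (c2-b2)*(d1-b1))*y^2 + ((c1-x)*(d2-y)-(c2-y)*(d1-x))*b2^2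 + ((d1-x)*(b2-y)-(d2-y)*(b1-x))*c2^2 + ((b1-x)*(c2-y)-(b2-y)*(c1-x))*d2^2)*ed3 +
      (γ*((c1-x)*(d2-y)-(c2-y)*(d1-x)))*Hb + (γ*((d1-x)*(b2-y)-(d2-y)*(b1-x)))*Hc + (γ*((b1-x)*(c2-y)-(b2-y)*(c1-x)))*Hd
  have hTp := (mul_eq_zero.mp (hT (a1+p*v1) (a2+p*v2))).resolve_left H3
  have hTq := (mul_eq_zero.mp (hT (a1+q*v1) (a2+q*v2))).resolve_left H3
  have hFp : (a1+p*v1-o1)^2+(a2+p*v2-o2)^2-s = (v1^2+v2^2)*(p-l)*(p-m) := by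
    apply mul_left_cancel₀ (sub_ne_zero.mpr Hlm)
    linear_combination (p-m)*Hl - (p-l)*Hm
  have hFq : (a1+q*v1-o1)^2+(a2+q*v2-o2)^2-s = (v1^2+v2^2)*(q-l)*(q-m) := by
    apply mul_left_cancel₀ (sub_ne_zero.mpr Hlm)
    linear_combination (q-m)*Hl - (q-l)*Hm
  have hGp : (( (c1-b1)*(a2+p*v2-b2)-(c2-b2)*(a1+p*v1-b1) )*( (e1-d1)*(a2+p*v2-d2)-(e2-d2)*(a1+p*v1-d1) )) = (((c1-b1)*v2-(c2-b2)*v1)*((e1-d1)*v2-(e2-d2)*v1))*(p-i)*(p-k) := by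
    linear_combination ((e1-d1)*(a2+p*v2-d2)-(e2-d2)*(a1+p*v1-d1))*Hi + (((c1-b1)*v2-(c2-b2)*v1)*(p-i))*Hk
  have hGq : (( (c1-b1)*(a2+q*v2-b2)-(c2-b2)*(a1+q*v1-b1) )*( (e1-d1)*(a2+q*v2-d2)-(e2-d2)*(a1+q*v1-d1) )) = (((c1-b1)*v2-(c2-b2)*v1)*((e1-d1)*v2-(e2-d2)*v1))*(q-i)*(q-k) := by
    linear_combination ((e1-d1)*(a2+q*v2-d2)-(e2-d2)*(a1+q*v1-d1))*Hi + (((c1-b1)*v2-(c2-b2)*v1)*(q-i))*Hk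
  have hHp : (( (e1-b1)*(a2+p*v2-b2)-(e2-b2)*(a1+p*v1-b1) )*( (d1-c1)*(a2+p*v2-c2)-(d2-c2)*(a1+p*v1-c1) )) = 0 := by
    linear_combination ((d1-c1)*(a2+p*v2-c2)-(d2-c2)*(a1+p*v1-c1))*Hp
  have hHq : (( (e1-b1)*(a2+q*v2-b2)-(e2-b2)*(a1+q*v1-b1) )*( (d1-c1)*(a2+q*v2-c2)-(d2-c2)*(a1+q*v1-c1) )) = 0 := by
    linear_combination ((e1-b1)*(a2+q*v2-b2)-(e2-b2)*(a1+q*v1-b1))*Hq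
  have hEp : γ*((v1^2+v2^2)*(p-l)*(p-m)) = α*((((c1-b1)*v2-(c2-b2)*v1)*((e1-d1)*v2-(e2-d2)*v1))*(p-i)*(p-k)) := by
    linear_combination hTp - γ*hFp + α*hGp + β*hHp
  have hEq : γ*((v1^2+v2^2)*(q-l)*(q-m)) = α*((((c1-b1)*v2-(c2-b2)*v1)*((e1-d1)*v2-(e2-d2)*v1))*(q-i)*(q-k)) := by
    linear_combination hTq - γ*hFq + α*hGq + β*hHq
  have hW : γ*(v1^2+v2^2) ≠ 0 := mul_ne_zero hγ Hv
  have hfin : (γ*(v1^2+v2^2)) *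
      ((q-l)*(q-m)*(p-i)*(p-k) - (p-l)*(p-m)*(q-i)*(q-k)) = 0 := by
    linear_combination ((p-i)*(p-k))*hEq - ((q-i)*(q-k))*hEp
  have := (mul_eq_zero.mp hfin).resolve_left hW
  linarith

private lemma vec_ne_zero {A0 A1 : Pt} (h : A0 ≠ A1) :
    (A1 0 - A0 0)^2 + (A1 1 - A0 1)^2 ≠ 0 := by
  intro hN
  apply h
  have h0 : A1 0 - A0 0 = 0 := by nlinarith [sq_nonneg (A1 0 - A0 0), sq_nonneg (A1 1 - A0 1)]
  have h1 : A1 1 - A0 1 = 0 := by nlinarith [sq_nonneg (A1 0 - A0 0), sq_nonneg (A1 1 - A0 1)]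
  ext j
  fin_cases j
  · show A0 0 = A1 0; linarith
  · show A0 1 = A1 1; linarith

private lemma mem_lineThrough {A0 A1 X : Pt} (hX : X ∈ lineThrough A0 A1) :
    ∃ t : ℝ, X = t • (A1 - A0) + A0 := by
  have h1 : X -ᵥ A0 ∈ (affineSpan ℝ ({A0, A1} : Set Pt)).direction :=
    AffineSubspace.vsub_mem_direction hX (left_mem_affineSpan_pair ℝ A0 A1)
  rw [direction_affineSpan, mem_vectorSpan_pair_rev] at h1
  obtain ⟨t, ht⟩ := h1
  refine ⟨t, ?_⟩
  have ht' : t • (A1 - A0) = X - A0 := by simpa [vsub_eq_sub] using ht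
  rw [ht']
  abel

private lemma coord_of_eq {X W Z : Pt} {t : ℝ} (h : X = t • (Z - W) + W) (j : Fin 2) :
    X j = W j + t * (Z j - W j) := by
  rw [h]
  show t * (Z j - W j) + W j = _
  ring

private lemma collinear_of_cross_eq_zero (X Y Z : Pt)
    (h : (Y 0 - X 0) * (Z 1 - X 1) - (Y 1 - X 1) * (Z 0 - X 0) = 0) :
    Collinear ℝ ({X, Y, Z} : Set Pt) := by
  rcases eq_or_ne Y X with hXY | hXY
  · apply Collinear.subset ?_ (collinear_pair ℝ X Z)
    intro w hw
    simp only [Set.mem_insert_iff, Set.mem_singleton_iff] at hw ⊢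
    rcases hw with h1 | h1 | h1
    · tauto
    · left; rw [h1, hXY]
    · tauto
  · have hN : (Y 0 - X 0)^2 + (Y 1 - X 1)^2 ≠ 0 := by
      intro hN
      apply hXY
      have h0 : Y 0 - X 0 = 0 := by nlinarith [sq_nonneg (Y 0 - X 0), sq_nonneg (Y 1 - X 1)]
      have h1 : Y 1 - X 1 = 0 := by nlinarith [sq_nonneg (Y 0 - X 0), sq_nonneg (Y 1 - X 1)]
      ext j
      fin_cases j
      · show Y 0 = X 0; linarith
      · show Y 1 = X 1; linarith
    rw [collinear_iff_exists_forall_eq_smul_vadd]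
    refine ⟨X, Y - X, ?_⟩
    intro w hw
    simp only [Set.mem_insert_iff, Set.mem_singleton_iff] at hw
    rcases hw with rfl | rfl | rfl
    · exact ⟨0, by simp⟩
    · refine ⟨1, ?_⟩
      rw [one_smul, vadd_eq_add]
      abel
    · refine ⟨((Y 0 - X 0)*(w 0 - X 0)+(Y 1 - X 1)*(w 1 - X 1))/((Y 0 - X 0)^2+(Y 1 - X 1)^2), ?_⟩
      rw [vadd_eq_add]
      set r : ℝ := ((Y 0 - X 0)*(w 0 - X 0)+(Y 1 - X 1)*(w 1 - X 1))/((Y 0 - X 0)^2+(Y 1 - X 1)^2) with hr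
      have h0 : r * (Y 0 - X 0) = w 0 - X 0 := by
        rw [hr, div_mul_eq_mul_div, div_eq_iff hN]
        linear_combination (Y 1 - X 1) * h
      have h1 : r * (Y 1 - X 1) = w 1 - X 1 := by
        rw [hr, div_mul_eq_mul_div, div_eq_iff hN]
        linear_combination (-(Y 0 - X 0)) * h
      ext j
      fin_cases j
      · show w 0 = r * (Y 0 - X 0) + X 0
        linarith
      · show w 1 = r * (Y 1 - X 1) + X 1
        linarith

set_option maxHeartbeats 1000000 in
/-- Desargues'"'"' involution theorem for a circle through the quadrangle. -/
theorem desargues_involution_circle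
    (O₀ : Pt) (ρ : ℝ) (hρ : 0 < ρ)
    (B C D E : Pt)
    (hB : B ∈ Metric.sphere O₀ ρ) (hC : C ∈ Metric.sphere O₀ ρ)
    (hD : D ∈ Metric.sphere O₀ ρ) (hE : E ∈ Metric.sphere O₀ ρ)
    (hdist : List.Pairwise (· ≠ ·) [B, C, D, E])
    (hBCD : ¬ Collinear ℝ ({B, C, D} : Set Pt))
    (hBCE : ¬ Collinear ℝ ({B, C, E} : Set Pt))
    (hBDE : ¬ Collinear ℝ ({B, D, E} : Set Pt))
    (hCDE : ¬ Collinear ℝ ({C, D, E} : Set Pt))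
    (Δ : AffineSubspace ℝ Pt) (hΔ : IsLine Δ)
    (hnpar : ∀ s ∈ sides B C D E, ¬ AffineSubspace.Parallel Δ s)
    (havoid : ∀ s₁ ∈ sides B C D E, ∀ s₂ ∈ sides B C D E, s₁ ≠ s₂ →
      ∀ X : Pt, X ∈ s₁ → X ∈ s₂ → X ∉ Δ)
    (L M : Pt) (hLM : L ≠ M)
    (hL : L ∈ Δ ∧ L ∈ Metric.sphere O₀ ρ)
    (hM : M ∈ Δ ∧ M ∈ Metric.sphere O₀ ρ)
    (I K P Q : Pt)
    (hI : I ∈ Δ ∧ I ∈ lineThrough B C)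
    (hK : K ∈ Δ ∧ K ∈ lineThrough D E)
    (hP : P ∈ Δ ∧ P ∈ lineThrough B E)
    (hQ : Q ∈ Δ ∧ Q ∈ lineThrough C D) :
    dist Q L * dist Q M * dist P I * dist P K
      = dist P L * dist P M * dist Q I * dist Q K := by
  
  obtain ⟨A0, A1, hA01, rfl⟩ := hΔ
  obtain ⟨l, hLe⟩ := mem_lineThrough hL.1
  obtain ⟨m, hMe⟩ := mem_lineThrough hM.1
  obtain ⟨i, hIe⟩ := mem_lineThrough hI.1
  obtain ⟨k, hKe⟩ := mem_lineThrough hK.1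
  obtain ⟨p, hPe⟩ := mem_lineThrough hP.1
  obtain ⟨q, hQe⟩ := mem_lineThrough hQ.1
  obtain ⟨si, hIbc⟩ := mem_lineThrough hI.2
  obtain ⟨sk, hKde⟩ := mem_lineThrough hK.2
  obtain ⟨sp, hPbe⟩ := mem_lineThrough hP.2
  obtain ⟨sq', hQcd⟩ := mem_lineThrough hQ.2
  have hsph : ∀ X : Pt, X ∈ Metric.sphere O₀ ρ →
      (X 0 - O₀ 0)^2 + (X 1 - O₀ 1)^2 = ρ^2 := by
    intro X hX
    have hd : dist X O₀ = ρ := Metric.mem_sphere.mp hX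
    rw [EuclideanSpace.dist_eq] at hd
    have h2 := congrArg (· ^ 2) hd
    simp only at h2
    rw [Real.sq_sqrt (by positivity)] at h2
    rw [Fin.sum_univ_two, Real.dist_eq, Real.dist_eq, sq_abs, sq_abs] at h2
    exact h2
  have Hb := hsph B hB
  have Hc := hsph C hC
  have Hd := hsph D hD
  have He := hsph E hE
  have hL0 := coord_of_eq hLe 0; have hL1 := coord_of_eq hLe 1
  have hM0 := coord_of_eq hMe 0; have hM1 := coord_of_eq hMe 1
  have hI0 := coord_of_eq hIe 0; have hI1 := coord_of_eq hIe 1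
  have hK0 := coord_of_eq hKe 0; have hK1 := coord_of_eq hKe 1
  have hP0 := coord_of_eq hPe 0; have hP1 := coord_of_eq hPe 1
  have hQ0 := coord_of_eq hQe 0; have hQ1 := coord_of_eq hQe 1
  have hIb0 := coord_of_eq hIbc 0; have hIb1 := coord_of_eq hIbc 1
  have hKd0 := coord_of_eq hKde 0; have hKd1 := coord_of_eq hKde 1
  have hPb0 := coord_of_eq hPbe 0; have hPb1 := coord_of_eq hPbe 1
  have hQc0 := coord_of_eq hQcd 0; have hQc1 := coord_of_eq hQcd 1
  have Hl' : (A0 0 + l*(A1 0 - A0 0) - O₀ 0)^2 + (A0 1 + l*(A1 1 - A0 1) - O₀ 1)^2 = ρ^2 := by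
    have := hsph L hL.2
    rw [hL0, hL1] at this
    exact this
  have Hm' : (A0 0 + m*(A1 0 - A0 0) - O₀ 0)^2 + (A0 1 + m*(A1 1 - A0 1) - O₀ 1)^2 = ρ^2 := by
    have := hsph M hM.2
    rw [hM0, hM1] at this
    exact this
  have Hi' : (C 0 - B 0)*(A0 1 + i*(A1 1 - A0 1) - B 1)
      - (C 1 - B 1)*(A0 0 + i*(A1 0 - A0 0) - B 0) = 0 := by
    linear_combination (C 0 - B 0)*hIb1 - (C 1 - B 1)*hIb0 - (C 0 - B 0)*hI1 + (C 1 - B 1)*hI0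
  have Hk' : (E 0 - D 0)*(A0 1 + k*(A1 1 - A0 1) - D 1)
      - (E 1 - D 1)*(A0 0 + k*(A1 0 - A0 0) - D 0) = 0 := by
    linear_combination (E 0 - D 0)*hKd1 - (E 1 - D 1)*hKd0 - (E 0 - D 0)*hK1 + (E 1 - D 1)*hK0
  have Hp' : (E 0 - B 0)*(A0 1 + p*(A1 1 - A0 1) - B 1)
      - (E 1 - B 1)*(A0 0 + p*(A1 0 - A0 0) - B 0) = 0 := by
    linear_combination (E 0 - B 0)*hPb1 - (E 1 - B 1)*hPb0 - (E 0 - B 0)*hP1 + (E 1 - B 1)*hP0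
  have Hq' : (D 0 - C 0)*(A0 1 + q*(A1 1 - A0 1) - C 1)
      - (D 1 - C 1)*(A0 0 + q*(A1 0 - A0 0) - C 0) = 0 := by
    linear_combination (D 0 - C 0)*hQc1 - (D 1 - C 1)*hQc0 - (D 0 - C 0)*hQ1 + (D 1 - C 1)*hQ0
  have Hv := vec_ne_zero hA01
  have Hlm : l ≠ m := by
    intro h
    apply hLM
    rw [hLe, hMe, h]
  have H1 : (C 0 - B 0)*(E 1 - B 1) - (C 1 - B 1)*(E 0 - B 0) ≠ 0 :=
    fun h => hBCE (collinear_of_cross_eq_zero B C E h)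
  have H2 : (D 0 - B 0)*(E 1 - B 1) - (D 1 - B 1)*(E 0 - B 0) ≠ 0 :=
    fun h => hBDE (collinear_of_cross_eq_zero B D E h)
  have H3 : (C 0 - B 0)*(D 1 - B 1) - (C 1 - B 1)*(D 0 - B 0) ≠ 0 :=
    fun h => hBCD (collinear_of_cross_eq_zero B C D h)
  have key := key_scalar (B 0) (B 1) (C 0) (C 1) (D 0) (D 1) (E 0) (E 1) (O₀ 0) (O₀ 1) (ρ^2)
    (A0 0) (A0 1) (A1 0 - A0 0) (A1 1 - A0 1) l m i k p q
    Hb Hc Hd He Hl' Hm' Hi' Hk' Hp' Hq' Hv Hlm H1 H2 H3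
  have hdist : ∀ (X Y : Pt) (sX sY : ℝ), X = sX • (A1 - A0) + A0 → Y = sY • (A1 - A0) + A0 →
      dist X Y = |sX - sY| * ‖A1 - A0‖ := by
    intro X Y sX sY hX hY
    rw [hX, hY, dist_eq_norm]
    rw [show sX • (A1 - A0) + A0 - (sY • (A1 - A0) + A0) = (sX - sY) • (A1 - A0) by
      rw [sub_smul]; abel]
    rw [norm_smul, Real.norm_eq_abs]
  rw [hdist Q L q l hQe hLe, hdist Q M q m hQe hMe, hdist P I p i hPe hIe,
    hdist P K p k hPe hKe, hdist P L p l hPe hLe, hdist P M p m hPe hMe,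
    hdist Q I q i hQe hIe, hdist Q K q k hQe hKe]
  have habs : |(q-l)*(q-m)*(p-i)*(p-k)| = |(p-l)*(p-m)*(q-i)*(q-k)| := by rw [key]
  calc |q-l| * ‖A1-A0‖ * (|q-m| * ‖A1-A0‖) * (|p-i| * ‖A1-A0‖) * (|p-k| * ‖A1-A0‖)
      = |(q-l)*(q-m)*(p-i)*(p-k)| * ‖A1-A0‖^4 := by
        rw [abs_mul, abs_mul, abs_mul]; ring
    _ = |(p-l)*(p-m)*(q-i)*(q-k)| * ‖A1-A0‖^4 := by rw [habs]
    _ = |p-l| * ‖A1-A0‖ * (|p-m| * ‖A1-A0‖) * (|q-i| * ‖A1-A0‖) * (|q-k| * ‖A1-A0‖) := by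
        rw [abs_mul, abs_mul, abs_mul]; ring
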